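/- Let E = EuclideanSpace ℝ (Fin D), let f : E → ℝ be differentiable, M-smooth, and satisfy the PL condition with constant μ > 0, with 0 < μ ≤ M, infimum f*, and set γ = 1 − μ/M. Let G, N > 0, let σ_1, …, σ_T > 0, and on a probability space let ν_1, …, ν_T : Ω → E be random vectors such that for each t, ν_t has mean zero, E‖ν_t‖² ≤ D, and ν_t is independent of (ν_1, …, ν_{t−1}). Define random iterates by θ_1 ∈ E deterministic and θ_{t+1} = θ_t − (1/M)(∇f(θ_t) + (G σ_t / N) ν_t). Then E[f(θ_{T+1})] − f* ≤ γ^T (f(θ_1) − f*) + (D G² / (2 M N²)) ∑_{t=1}^T γ^{T−t} σ_t². -/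

import Mathlib

open scoped RealInnerProductSpace
open MeasureTheory ProbabilityTheory Finset

/-- **Expected excess risk of Private Gradient Descent under the PL condition.**
With step size `1/M`, privacy noise `(G σ_t / N) ν_t` at step `t` (mean zero, second moment
at most `D`, independent of the past), `γ = 1 - μ/M`, the final expected excess risk satisfies
`E[f(θ_{T+1})] - f* ≤ γ^T (f(θ₁) - f*) + (D G²/(2 M N²)) ∑_{t=1}^T γ^{T-t} σ_t²`. -/
theorem private_gradient_descent_excess_risk
    (D T : ℕ) (hT : 0 < T)
    (f : EuclideanSpace ℝ (Fin D) → ℝ) (M μ fstar G N : ℝ)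
    (hdiff : Differentiable ℝ f) (hM : 0 < M) (hμ : 0 < μ) (hμM : μ ≤ M)
    (hsmooth : ∀ x y : EuclideanSpace ℝ (Fin D),
      f y ≤ f x + ⟪gradient f x, y - x⟫ + M / 2 * ‖y - x‖ ^ 2)
    (hfstar : IsGLB (Set.range f) fstar)
    (hPL : ∀ θ : EuclideanSpace ℝ (Fin D), ‖gradient f θ‖ ^ 2 ≥ 2 * μ * (f θ - fstar))
    (hG : 0 < G) (hN : 0 < N)
    (σ : ℕ → ℝ) (hσ : ∀ t, 0 < σ t)
    (Ω : Type) [MeasureSpace Ω] [IsProbabilityMeasure (volume : Measure Ω)]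
    (ν : ℕ → Ω → EuclideanSpace ℝ (Fin D))
    (hmeas : ∀ t, Measurable (ν t))
    (hint : ∀ t, Integrable (ν t))
    (hmean : ∀ t, ∫ ω, ν t ω = 0)
    (hmoment2int : ∀ t, Integrable (fun ω => ‖ν t ω‖ ^ 2))
    (hmoment2 : ∀ t, ∫ ω, ‖ν t ω‖ ^ 2 ≤ (D : ℝ))
    (hindep : ∀ t, IndepFun (ν t) (fun ω (i : Fin (t - 1)) => ν (i + 1) ω))
    (θ₁ : EuclideanSpace ℝ (Fin D))
    (θ : ℕ → Ω → EuclideanSpace ℝ (Fin D))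
    (hθ₁ : ∀ ω, θ 1 ω = θ₁)
    (hiter : ∀ t ω, 1 ≤ t →
      θ (t + 1) ω = θ t ω - (1 / M) • (gradient f (θ t ω) + (G * σ t / N) • ν t ω))
    (hfint : ∀ t, Integrable (fun ω => f (θ t ω))) :
    (∫ ω, f (θ (T + 1) ω)) - fstar ≤
      (1 - μ / M) ^ T * (f θ₁ - fstar)
        + ((D : ℝ) * G ^ 2 / (2 * M * N ^ 2)) * ∑ t ∈ Icc 1 T, (1 - μ / M) ^ (T - t) * σ t ^ 2 := by
  have hγ : 0 ≤ 1 - μ / M := by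
    rw [sub_nonneg]; exact (div_le_one hM).mpr hμM
  -- pointwise one-step descent bound
  have hstep : ∀ t ω, 1 ≤ t →
      f (θ (t + 1) ω) ≤ (1 - μ / M) * f (θ t ω) + (μ / M) * fstar
        + ((G * σ t / N) ^ 2 / (2 * M)) * ‖ν t ω‖ ^ 2 := by
    intro t ω ht
    set x := θ t ω with hx
    set g := gradient f x with hg
    set v := ν t ω with hv
    set c := G * σ t / N with hc
    have hy : θ (t + 1) ω = x - (1 / M) • (g + c • v) := hiter t ω ht
    have hs := hsmooth x (θ (t + 1) ω)
    rw [hy] at hs ⊢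
    have hxy : x - (1 / M) • (g + c • v) - x = -((1 / M) • (g + c • v)) := by
      abel
    rw [hxy] at hs
    have hinner : ⟪g, -((1 / M) • (g + c • v))⟫
        = -(1 / M) * (‖g‖ ^ 2 + c * ⟪g, v⟫) := by
      rw [inner_neg_right, real_inner_smul_right, inner_add_right,
        real_inner_smul_right, real_inner_self_eq_norm_sq]
      ring
    have hnorm : ‖-((1 / M) • (g + c • v))‖ ^ 2
        = (1 / M) ^ 2 * (‖g‖ ^ 2 + 2 * c * ⟪g, v⟫ + c ^ 2 * ‖v‖ ^ 2) := by
      rw [norm_neg, norm_smul, mul_pow, norm_add_sq_real, real_inner_smul_right,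
        norm_smul, mul_pow, Real.norm_eq_abs, Real.norm_eq_abs, sq_abs, sq_abs]
      ring
    rw [hinner, hnorm] at hs
    have hMne : M ≠ 0 := ne_of_gt hM
    have key : f x + -(1 / M) * (‖g‖ ^ 2 + c * ⟪g, v⟫)
        + M / 2 * ((1 / M) ^ 2 * (‖g‖ ^ 2 + 2 * c * ⟪g, v⟫ + c ^ 2 * ‖v‖ ^ 2))
        = f x - 1 / (2 * M) * ‖g‖ ^ 2 + c ^ 2 / (2 * M) * ‖v‖ ^ 2 := by
      field_simp
      ring
    have hfy : f (x - (1 / M) • (g + c • v))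
        ≤ f x - 1 / (2 * M) * ‖g‖ ^ 2 + c ^ 2 / (2 * M) * ‖v‖ ^ 2 := by
      linarith [hs, key]
    have h3 : 0 ≤ (1 / (2 * M)) * (‖g‖ ^ 2 - 2 * μ * (f x - fstar)) :=
      mul_nonneg (by positivity) (by linarith [hPL x])
    have h4 : (1 / (2 * M)) * (‖g‖ ^ 2 - 2 * μ * (f x - fstar))
        = (1 - μ / M) * f x + (μ / M) * fstar - (f x - 1 / (2 * M) * ‖g‖ ^ 2) := by
      field_simp
      ring
    linarith
  -- one-step bound in expectation
  have hKey : ∀ t, 1 ≤ t →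
      (∫ ω, f (θ (t + 1) ω)) - fstar
        ≤ (1 - μ / M) * ((∫ ω, f (θ t ω)) - fstar)
          + ((D : ℝ) * G ^ 2 / (2 * M * N ^ 2)) * σ t ^ 2 := by
    intro t ht
    set c := G * σ t / N with hc
    have hI1 : Integrable (fun ω => (1 - μ / M) * f (θ t ω)) := (hfint t).const_mul _
    have hI2 : Integrable (fun ω => (1 - μ / M) * f (θ t ω) + (μ / M) * fstar) :=
      hI1.add (integrable_const _)
    have hI3 : Integrable (fun ω => (c ^ 2 / (2 * M)) * ‖ν t ω‖ ^ 2) :=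
      (hmoment2int t).const_mul _
    have hle := integral_mono (μ := (volume : Measure Ω)) (hfint (t + 1)) (hI2.add hI3)
      (fun ω => hstep t ω ht)
    simp only [Pi.add_apply] at hle
    rw [integral_add hI2 hI3, integral_add hI1 (integrable_const _),
      integral_const_mul, integral_const_mul, integral_const] at hle
    simp only [measure_univ, probReal_univ, ENNReal.toReal_one, smul_eq_mul, one_mul] at hle
    have hm := hmoment2 t
    have hcoef : (0:ℝ) ≤ c ^ 2 / (2 * M) := by positivity
    have hKeq : c ^ 2 / (2 * M) * (D : ℝ)
        = (D : ℝ) * G ^ 2 / (2 * M * N ^ 2) * σ t ^ 2 := by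
      rw [hc]; field_simp
    have h7 : ∫ ω, (c ^ 2 / (2 * M)) * ‖ν t ω‖ ^ 2 = (c ^ 2 / (2 * M)) * ∫ ω, ‖ν t ω‖ ^ 2 :=
      integral_const_mul _ _
    have := mul_le_mul_of_nonneg_left hm hcoef
    linarith
  -- induction
  have base : (∫ ω, f (θ 1 ω)) = f θ₁ := by
    simp [hθ₁]
  have main : ∀ n : ℕ, (∫ ω, f (θ (n + 1) ω)) - fstar
      ≤ (1 - μ / M) ^ n * (f θ₁ - fstar)
        + ((D : ℝ) * G ^ 2 / (2 * M * N ^ 2))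
          * ∑ t ∈ Icc 1 n, (1 - μ / M) ^ (n - t) * σ t ^ 2 := by
    intro n
    induction n with
    | zero => simp [base]
    | succ n ih =>
      have hk := hKey (n + 1) (by omega)
      have h5 := mul_le_mul_of_nonneg_left ih hγ
      have hsum : ∑ t ∈ Icc 1 (n + 1), (1 - μ / M) ^ (n + 1 - t) * σ t ^ 2
          = (1 - μ / M) * ∑ t ∈ Icc 1 n, (1 - μ / M) ^ (n - t) * σ t ^ 2
            + σ (n + 1) ^ 2 := by
        rw [Finset.sum_Icc_succ_top (by omega), Finset.mul_sum]
        congr 1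
        · apply Finset.sum_congr rfl
          intro t htmem
          have h6 : n + 1 - t = (n - t) + 1 := by
            have := Finset.mem_Icc.mp htmem; omega
          rw [h6, pow_succ]; ring
        · simp
      rw [hsum, pow_succ]
      nlinarith [h5, hk]
  exact main T
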